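/- Let (V,g) be a finite-dimensional real vector space with a nondegenerate symmetric bilinear form, and let A be a symmetric bilinear form on V of rank 2. Then A² ∧ A² = −(1/2)(tr(A²) − tr(A)²)·(A ∧ A). -/

import Mathlib

variable {V : Type*} [AddCommGroup V] [Module ℝ V]

/-- Kulkarni–Nomizu product of two (0,2)-tensors. -/
def kn (A B : V → V → ℝ) : V → V → V → V → ℝ := fun x1 x2 x3 x4 =>
  A x1 x4 * B x2 x3 + A x2 x3 * B x1 x4 - A x1 x3 * B x2 x4 - A x2 x4 * B x1 x3

/-- The endomorphism `(X ∧_A Y)Z = A(Y,Z)X − A(X,Z)Y`. -/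
def wedgeV (A : V → V → ℝ) (x y z : V) : V := A y z • x - A x z • y

/-- Tachibana tensor `Q(A,T)` of a (0,2)-tensor `A` and a (0,4)-tensor `T`. -/
def Q4 (A : V → V → ℝ) (T : V → V → V → V → ℝ) : V → V → V → V → V → V → ℝ :=
  fun x1 x2 x3 x4 x y =>
    -(T (wedgeV A x y x1) x2 x3 x4) - T x1 (wedgeV A x y x2) x3 x4
      - T x1 x2 (wedgeV A x y x3) x4 - T x1 x2 x3 (wedgeV A x y x4)

lemma trace_smulRight' {V : Type*} [AddCommGroup V] [Module ℝ V] [FiniteDimensional ℝ V]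
    (f : V →ₗ[ℝ] ℝ) (m : V) : LinearMap.trace ℝ V (f.smulRight m) = f m := by
  have h : f.smulRight m = dualTensorHom ℝ V V (f ⊗ₜ m) := by
    ext x; simp [dualTensorHom_apply]
  rw [h, LinearMap.trace_eq_contract_apply, contractLeft_apply]

/-- if `rank A = 2` then `A² ∧ A² = −(1/2)(tr(A²) − tr(A)²)·(A ∧ A)`. -/
theorem stmt_5 {V : Type*} [AddCommGroup V] [Module ℝ V] [FiniteDimensional ℝ V]
    (g A : V →ₗ[ℝ] V →ₗ[ℝ] ℝ)
    (hg : ∀ x y, g x y = g y x)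
    (hgnd : ∀ x : V, (∀ y : V, g x y = 0) → x = 0)
    (hA : ∀ x y, A x y = A y x)
    (a : V →ₗ[ℝ] V) (ha : ∀ x y, g (a x) y = A x y)
    (hrank : Module.finrank ℝ (LinearMap.range a) = 2) :
    ∀ x₁ x₂ x₃ x₄ : V,
      kn (fun u v => A (a u) v) (fun u v => A (a u) v) x₁ x₂ x₃ x₄
        = -(1/2 : ℝ) * (LinearMap.trace ℝ V (a ∘ₗ a) - (LinearMap.trace ℝ V a) ^ 2)
            * kn (fun u v => A u v) (fun u v => A u v) x₁ x₂ x₃ x₄ := by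
  intro x₁ x₂ x₃ x₄
  -- self-adjointness of a w.r.t. g
  have hsa : ∀ x y, g (a x) y = g x (a y) := by
    intro x y
    rw [ha, hA, ← ha, hg]
  -- basis of the range
  let b : Module.Basis (Fin 2) ℝ (LinearMap.range a) :=
    Module.finBasisOfFinrankEq ℝ (LinearMap.range a) hrank
  let E : Fin 2 → V := fun i => (b i : V)
  let φ : Fin 2 → (V →ₗ[ℝ] ℝ) := fun i => (b.coord i).comp a.rangeRestrict
  have hdec : ∀ x : V, a x = φ 0 x • E 0 + φ 1 x • E 1 := by
    intro x
    have h := congrArg (Subtype.val) (b.sum_repr (a.rangeRestrict x)).symm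
    rw [Fin.sum_univ_two] at h
    simpa [Fin.sum_univ_two, φ, E, Module.Basis.coord_apply] using h
  -- preimages of the basis vectors
  obtain ⟨u0, hu0⟩ : ∃ u : V, a u = E 0 := (b 0).2
  obtain ⟨u1, hu1⟩ : ∃ u : V, a u = E 1 := (b 1).2
  have hKsym : g u1 (E 0) = g u0 (E 1) := by
    rw [← hu0, ← hu1, hg u1 (a u0), hsa]
  -- g (E k) y in terms of coordinates
  have hgE0 : ∀ y : V, g (E 0) y = φ 0 y * g u0 (E 0) + φ 1 y * g u0 (E 1) := by
    intro y
    rw [← hu0, hsa, hdec y]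
    simp only [map_add, map_smul, smul_eq_mul]
    rw [hu0]
  have hgE1 : ∀ y : V, g (E 1) y = φ 0 y * g u1 (E 0) + φ 1 y * g u1 (E 1) := by
    intro y
    rw [← hu1, hsa, hdec y]
    simp only [map_add, map_smul, smul_eq_mul]
    rw [hu1]
  -- A in coordinates
  have hAform : ∀ x y : V,
      A x y = φ 0 x * (φ 0 y * g u0 (E 0) + φ 1 y * g u0 (E 1))
        + φ 1 x * (φ 0 y * g u1 (E 0) + φ 1 y * g u1 (E 1)) := by
    intro x y
    rw [← ha, hdec x]
    simp only [map_add, map_smul, LinearMap.add_apply, LinearMap.smul_apply, smul_eq_mul]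
    rw [hgE0 y, hgE1 y]
  -- A² in coordinates
  have hA2form : ∀ x y : V,
      A (a x) y =
        φ 0 x * (φ 0 y * (φ 0 (E 0) * g u0 (E 0) + φ 1 (E 0) * g u0 (E 1))
                  + φ 1 y * (φ 0 (E 1) * g u0 (E 0) + φ 1 (E 1) * g u0 (E 1)))
        + φ 1 x * (φ 0 y * (φ 0 (E 0) * g u1 (E 0) + φ 1 (E 0) * g u1 (E 1))
                  + φ 1 y * (φ 0 (E 1) * g u1 (E 0) + φ 1 (E 1) * g u1 (E 1))) := by
    intro x y
    have h : A (a x) y = g (a x) (a y) := by rw [← ha, hsa]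
    rw [h, hdec x, hdec y]
    simp only [map_add, map_smul, LinearMap.add_apply, LinearMap.smul_apply, smul_eq_mul]
    rw [hgE0 (E 0), hgE0 (E 1), hgE1 (E 0), hgE1 (E 1)]
    ring
  -- decomposition of a as a sum of rank-one maps
  have haeq : a = (φ 0).smulRight (E 0) + (φ 1).smulRight (E 1) := by
    ext x; simpa using hdec x
  have htra : LinearMap.trace ℝ V a = φ 0 (E 0) + φ 1 (E 1) := by
    rw [haeq, map_add, trace_smulRight', trace_smulRight']
  have htra2 : LinearMap.trace ℝ V (a ∘ₗ a)
      = φ 0 (E 0) ^ 2 + 2 * (φ 0 (E 1) * φ 1 (E 0)) + φ 1 (E 1) ^ 2 := by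
    have h : a ∘ₗ a = (φ 0).smulRight (a (E 0)) + (φ 1).smulRight (a (E 1)) := by
      ext x
      simp only [LinearMap.comp_apply, LinearMap.add_apply, LinearMap.smulRight_apply]
      rw [hdec x]
      simp only [map_add, map_smul]
    rw [h, map_add, trace_smulRight', trace_smulRight', hdec (E 0), hdec (E 1)]
    simp only [map_add, map_smul, smul_eq_mul]
    ring
  rw [htra, htra2]
  simp only [kn]
  rw [hAform x₁ x₄, hAform x₂ x₃, hAform x₁ x₃, hAform x₂ x₄,
    hA2form x₁ x₄, hA2form x₂ x₃, hA2form x₁ x₃, hA2form x₂ x₄, hKsym]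
  ring
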